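/- In the spin factor V_n (n ≥ 2), for a unit vector μ ∈ H_n, the two-dimensional subalgebra span{½(1+μ), ½(1−μ)} is a maximal associative unital subalgebra: any element of V_n operator commuting with this subalgebra already belongs to it. -/

import Mathlib

/-- The Jordan product of the spin factor `V = H ⊕ ℝ1`. -/
def spinMul {H : Type*} [NormedAddCommGroup H] [InnerProductSpace ℝ H]
    (x y : H × ℝ) : H × ℝ :=
  (x.2 • y.1 + y.2 • x.1, (inner ℝ x.1 y.1 : ℝ) + x.2 * y.2)

/-- In the spin factor (`dim H ≥ 2`), for a unit vector `μ`, the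
two-dimensional subalgebra `span{½(1+μ), ½(1-μ)}` is a maximal associative unital
subalgebra: any element operator commuting with every element of it already belongs
to it. -/
theorem stmt13 {H : Type*} [NormedAddCommGroup H] [InnerProductSpace ℝ H]
    (hdim : 2 ≤ Module.rank ℝ H) (μ : H) (hμ : ‖μ‖ = 1) :
    let p : H × ℝ := ((1 / 2 : ℝ) • μ, (1 / 2 : ℝ))
    let q : H × ℝ := (-((1 / 2 : ℝ) • μ), (1 / 2 : ℝ))
    let S := Submodule.span ℝ ({p, q} : Set (H × ℝ))
    ∀ x : H × ℝ,
      (∀ s ∈ S, ∀ z : H × ℝ, spinMul x (spinMul s z) = spinMul s (spinMul x z)) →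
      x ∈ S := by
  intro p q S x hx
  have hp : p ∈ S := Submodule.subset_span (Set.mem_insert _ _)
  have hq : q ∈ S := Submodule.subset_span (Set.mem_insert_of_mem _ rfl)
  have h := hx p hp (μ, 0)
  have h1 := congrArg Prod.fst h
  simp only [spinMul, p, real_inner_smul_left, real_inner_smul_right,
    real_inner_self_eq_norm_sq, hμ] at h1
  have hv : x.1 = (inner ℝ x.1 μ : ℝ) • μ := by
    have h2 : (1 / 2 : ℝ) • x.1 = (1 / 2 : ℝ) • ((inner ℝ x.1 μ : ℝ) • μ) := by
      linear_combination (norm := module) h1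
    exact smul_right_injective H (by norm_num) h2
  set c : ℝ := (inner ℝ x.1 μ : ℝ) with hc
  have hxeq : x = (x.2 + c) • p + (x.2 - c) • q := by
    ext
    · show x.1 = (x.2 + c) • ((1 / 2 : ℝ) • μ) + (x.2 - c) • (-((1 / 2 : ℝ) • μ))
      rw [hv]
      module
    · show x.2 = (x.2 + c) * (1 / 2) + (x.2 - c) * (1 / 2)
      ring
  rw [hxeq]
  exact Submodule.add_mem _ (Submodule.smul_mem _ _ hp) (Submodule.smul_mem _ _ hq)
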